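/- Under the stated assumptions, the process (1/η_m^{Y})_{0 ≤ m < n}, where η_m^{Y}(ω) := η_m^{Y(ω)}(ω), is a martingale under P with respect to the initially enlarged filtration (G_m)_{0 ≤ m < n}; that is, for all 0 ≤ m < m' < n, E_P[1/η_{m'}^{Y} | G_m] = 1/η_m^{Y} P-almost surely. -/

import Mathlib

open MeasureTheory Filter Set
open scoped ENNReal NNReal Topology

/-- Key single-set lemma: if `B` is a measurable set, `h = P[1_B | mk]` and `h > 0` a.e.,
then the function `u = 1_B · (P B).toReal / h` is a.e. nonnegative, integrable, and
`∫_A u = (P B).toReal * (P A).toReal` for every `mk`-measurable `A`. -/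
theorem condDensity_key {Ω : Type*} {mk mΩ : MeasurableSpace Ω} (hk : mk ≤ mΩ)
    (P : Measure Ω) [IsProbabilityMeasure P]
    {B : Set Ω} (hB : MeasurableSet[mΩ] B)
    (hpos : ∀ᵐ ω ∂P, 0 < (P[B.indicator (fun _ => (1 : ℝ)) | mk]) ω) :
    (0 ≤ᵐ[P] B.indicator fun ω => (P B).toReal / (P[B.indicator (fun _ => (1 : ℝ)) | mk]) ω)
    ∧ Integrable (B.indicator fun ω =>
        (P B).toReal / (P[B.indicator (fun _ => (1 : ℝ)) | mk]) ω) P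
    ∧ ∀ A : Set Ω, MeasurableSet[mk] A →
      ∫ ω in A, (B.indicator fun ω' =>
          (P B).toReal / (P[B.indicator (fun _ => (1 : ℝ)) | mk]) ω') ω ∂P
        = (P B).toReal * (P A).toReal := by
  haveI : SigmaFinite (P.trim hk) := (isFiniteMeasure_trim hk).toSigmaFinite
  set h : Ω → ℝ := P[B.indicator (fun _ => (1 : ℝ)) | mk] with hh
  set c : ℝ := (P B).toReal with hc
  have hc0 : 0 ≤ c := ENNReal.toReal_nonneg
  have hh_sm : StronglyMeasurable[mk] h := stronglyMeasurable_condExp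
  have hh_meas : Measurable[mk] h := hh_sm.measurable
  set q : Ω → ℝ := fun ω => c / h ω with hq
  have hq_meas : Measurable[mk] q := measurable_const.div hh_meas
  set u : Ω → ℝ := B.indicator q with hu
  have hu_meas : Measurable[mΩ] u := (hq_meas.mono hk le_rfl).indicator hB
  -- truncations
  set v : ℕ → Ω → ℝ := fun N ω => min (q ω) N with hv
  have hv_sm : ∀ N, StronglyMeasurable[mk] (v N) :=
    fun N => ((hq_meas.min measurable_const).stronglyMeasurable)
  have hIB : Integrable (B.indicator fun _ => (1 : ℝ)) P := by
    exact (integrable_const (1 : ℝ)).indicator hB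
  -- a.e. facts
  have hq_nn : ∀ᵐ ω ∂P, 0 ≤ q ω := by
    filter_upwards [hpos] with ω hω using div_nonneg hc0 hω.le
  have hvh_le : ∀ N, ∀ᵐ ω ∂P, 0 ≤ v N ω ∧ v N ω * h ω ≤ c := by
    intro N
    filter_upwards [hpos] with ω hω
    constructor
    · exact le_min (div_nonneg hc0 hω.le) (Nat.cast_nonneg N)
    · calc v N ω * h ω ≤ q ω * h ω :=
            mul_le_mul_of_nonneg_right (min_le_left _ _) hω.le
        _ = c := div_mul_cancel₀ c hω.ne'
  -- key identity for truncations
  have key : ∀ (w : Ω → ℝ), StronglyMeasurable[mk] w →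
      Integrable (w * B.indicator fun _ => (1 : ℝ)) P →
      ∫ ω, w ω * B.indicator (fun _ => (1 : ℝ)) ω ∂P = ∫ ω, w ω * h ω ∂P := by
    intro w hw hint
    have h1 := condExp_mul_of_stronglyMeasurable_left (μ := P) hw hint hIB
    have h2 : ∫ ω, (w * B.indicator fun _ => (1 : ℝ)) ω ∂P
        = ∫ ω, (P[w * B.indicator fun _ => (1 : ℝ) | mk]) ω ∂P :=
      (integral_condExp hk).symm
    rw [show (fun ω => w ω * B.indicator (fun _ => (1:ℝ)) ω)
        = w * B.indicator fun _ => (1 : ℝ) from rfl, h2, integral_congr_ae h1]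
    rfl
  -- integrability of each truncated product
  have hwA : ∀ (N : ℕ) (A : Set Ω), MeasurableSet[mk] A →
      Integrable (A.indicator (v N) * B.indicator fun _ => (1 : ℝ)) P := by
    intro N A hA
    refine Integrable.mono' (integrable_const (N : ℝ)) ?_ ?_
    · exact ((((hv_sm N).measurable.indicator hA).mono hk le_rfl).mul
        (measurable_const.indicator hB)).aestronglyMeasurable
    · filter_upwards [hvh_le N] with ω hω
      by_cases hA' : ω ∈ A <;> by_cases hB' : ω ∈ B <;>
        simp only [Pi.mul_apply, Set.indicator_of_mem, Set.indicator_of_notMem, hA', hB',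
          mul_one, mul_zero, zero_mul, norm_zero, Real.norm_eq_abs, not_false_iff] <;>
        try positivity
      rw [abs_of_nonneg hω.1]
      exact min_le_right _ _
  have hINT_vh : ∀ (N : ℕ) (A : Set Ω), MeasurableSet[mk] A →
      Integrable (fun ω => A.indicator (v N) ω * h ω) P := by
    intro N A hA
    refine Integrable.mono' (integrable_const c) ?_ ?_
    · exact ((((hv_sm N).measurable.indicator hA).mono hk le_rfl).mul
        (hh_meas.mono hk le_rfl)).aestronglyMeasurable
    · filter_upwards [hvh_le N, hpos] with ω hω hpω
      by_cases hA' : ω ∈ A <;>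
        simp only [Set.indicator_of_mem, Set.indicator_of_notMem, hA',
          zero_mul, norm_zero, Real.norm_eq_abs, not_false_iff]
      · rw [abs_of_nonneg (mul_nonneg hω.1 hpω.le)]; exact hω.2
      · exact hc0
  have hIN : ∀ (N : ℕ) (A : Set Ω), MeasurableSet[mk] A →
      ∫ ω, A.indicator (v N) ω * B.indicator (fun _ => (1 : ℝ)) ω ∂P
        = ∫ ω, A.indicator (v N) ω * h ω ∂P :=
    fun N A hA => key _ ((hv_sm N).indicator hA) (hwA N A hA)
  -- a.e. nonnegativity of u
  have hu_nn : 0 ≤ᵐ[P] u := by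
    filter_upwards [hq_nn] with ω hω
    by_cases hB' : ω ∈ B <;>
      simp [hu, Set.indicator_of_mem, Set.indicator_of_notMem, hB', hω]
  -- integrability of u
  have hint_le : ∀ N : ℕ, ∫ ω, v N ω * B.indicator (fun _ => (1 : ℝ)) ω ∂P ≤ c := by
    intro N
    have h0 := hIN N univ MeasurableSet.univ
    rw [Set.indicator_univ] at h0
    rw [h0]
    calc ∫ ω, v N ω * h ω ∂P ≤ ∫ _ω, c ∂P := by
          refine integral_mono_ae ?_ (integrable_const c) ?_
          · have := hINT_vh N univ MeasurableSet.univ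
            rwa [Set.indicator_univ] at this
          · filter_upwards [hvh_le N] with ω hω using hω.2
      _ = c := by simp
  have huN_int : ∀ N : ℕ, Integrable (fun ω => v N ω * B.indicator (fun _ => (1 : ℝ)) ω) P := by
    intro N
    have := hwA N univ MeasurableSet.univ
    rwa [Set.indicator_univ] at this
  have huN_nn : ∀ (N : ℕ) (ω : Ω), ω ∈ B → v N ω * B.indicator (fun _ => (1 : ℝ)) ω = v N ω := by
    intro N ω hω; rw [Set.indicator_of_mem hω, mul_one]
  have huN_nn' : ∀ (N : ℕ) (ω : Ω), ω ∉ B → v N ω * B.indicator (fun _ => (1 : ℝ)) ω = 0 := by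
    intro N ω hω; rw [Set.indicator_of_notMem hω, mul_zero]
  have hu_int : Integrable u P := by
    refine ⟨hu_meas.aestronglyMeasurable, ?_⟩
    have e1 : ∫⁻ a, (‖u a‖₊ : ℝ≥0∞) ∂P = ∫⁻ a, ENNReal.ofReal (u a) ∂P := by
      refine lintegral_congr_ae ?_
      filter_upwards [hu_nn] with ω hω
      rw [← enorm_eq_nnnorm, Real.enorm_eq_ofReal hω]
    have emono : ∀ ω : Ω, Monotone fun N : ℕ =>
        ENNReal.ofReal (v N ω * B.indicator (fun _ => (1 : ℝ)) ω) := by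
      intro ω N M hNM
      refine ENNReal.ofReal_le_ofReal ?_
      refine mul_le_mul_of_nonneg_right ?_ ?_
      · exact min_le_min le_rfl (Nat.cast_le.mpr hNM)
      · exact Set.indicator_nonneg (fun _ _ => zero_le_one) ω
    have esup : ∀ᵐ ω ∂P, ENNReal.ofReal (u ω)
        = ⨆ N : ℕ, ENNReal.ofReal (v N ω * B.indicator (fun _ => (1 : ℝ)) ω) := by
      filter_upwards [hq_nn] with ω hω
      by_cases hB' : ω ∈ B
      · have hval : u ω = q ω := Set.indicator_of_mem hB' _
        refine le_antisymm ?_ ?_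
        · obtain ⟨N0, hN0⟩ := exists_nat_ge (q ω)
          have : ENNReal.ofReal (u ω)
              = ENNReal.ofReal (v N0 ω * B.indicator (fun _ => (1 : ℝ)) ω) := by
            rw [huN_nn N0 ω hB', hval, hv]
            simp [min_eq_left hN0]
          rw [this]
          exact le_iSup (fun N : ℕ =>
            ENNReal.ofReal (v N ω * B.indicator (fun _ => (1 : ℝ)) ω)) N0
        · refine iSup_le fun N => ENNReal.ofReal_le_ofReal ?_
          rw [huN_nn N ω hB', hval]
          exact min_le_left _ _
      · simp [Set.indicator_of_notMem hB', hu, huN_nn' _ _ hB']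
    have e2 : ∫⁻ a, ENNReal.ofReal (u a) ∂P
        = ⨆ N : ℕ, ∫⁻ a, ENNReal.ofReal (v N a * B.indicator (fun _ => (1 : ℝ)) a) ∂P := by
      rw [lintegral_congr_ae esup]
      refine lintegral_iSup (fun N => ?_) (fun N M hNM ω => emono ω hNM)
      exact (((hv_sm N).measurable.mono hk le_rfl).mul
        (measurable_const.indicator hB)).ennreal_ofReal
    have e3 : ∀ N : ℕ, ∫⁻ a, ENNReal.ofReal (v N a * B.indicator (fun _ => (1 : ℝ)) a) ∂P
        ≤ ENNReal.ofReal c := by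
      intro N
      have hnn : 0 ≤ᵐ[P] fun ω => v N ω * B.indicator (fun _ => (1 : ℝ)) ω := by
        filter_upwards [hvh_le N] with ω hω
        exact mul_nonneg hω.1 (Set.indicator_nonneg (fun _ _ => zero_le_one) ω)
      rw [← ofReal_integral_eq_lintegral_ofReal (huN_int N) hnn]
      exact ENNReal.ofReal_le_ofReal (hint_le N)
    show ∫⁻ a, (‖u a‖₊ : ℝ≥0∞) ∂P < ⊤
    rw [e1, e2]
    exact lt_of_le_of_lt (iSup_le e3) ENNReal.ofReal_lt_top
  refine ⟨hu_nn, hu_int, fun A hA => ?_⟩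
  -- limit of truncations, left side
  have hL : Tendsto (fun N : ℕ => ∫ ω, A.indicator (v N) ω * B.indicator (fun _ => (1 : ℝ)) ω ∂P)
      atTop (𝓝 (∫ ω, A.indicator u ω ∂P)) := by
    refine tendsto_integral_of_dominated_convergence u
      (fun N => ((((hv_sm N).measurable.indicator hA).mono hk le_rfl).mul
        (measurable_const.indicator hB)).aestronglyMeasurable) hu_int ?_ ?_
    · intro N
      filter_upwards [hvh_le N, hq_nn] with ω hω hqω
      by_cases hA' : ω ∈ A <;> by_cases hB' : ω ∈ B <;>
        simp only [Set.indicator_of_mem, Set.indicator_of_notMem, hA', hB', hu,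
          mul_one, mul_zero, zero_mul, norm_zero, Real.norm_eq_abs, not_false_iff]
      · rw [abs_of_nonneg hω.1]; exact min_le_left _ _
      · exact le_rfl
      · exact hqω
      · exact le_rfl
    · filter_upwards [hq_nn] with ω hω
      by_cases hA' : ω ∈ A <;> by_cases hB' : ω ∈ B <;>
        simp only [Set.indicator_of_mem, Set.indicator_of_notMem, hA', hB', hu,
          mul_one, mul_zero, zero_mul, not_false_iff]
      · obtain ⟨N0, hN0⟩ := exists_nat_ge (q ω)
        refine Tendsto.congr' ?_ (tendsto_const_nhds (x := q ω))
        filter_upwards [eventually_ge_atTop N0] with N hN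
        rw [hv]
        simp only
        rw [min_eq_left (hN0.trans (Nat.cast_le.mpr hN))]
      · exact tendsto_const_nhds
      · exact tendsto_const_nhds
      · exact tendsto_const_nhds
  -- limit of truncations, right side
  have hR : Tendsto (fun N : ℕ => ∫ ω, A.indicator (v N) ω * h ω ∂P)
      atTop (𝓝 (∫ ω, A.indicator (fun _ => c) ω ∂P)) := by
    refine tendsto_integral_of_dominated_convergence (fun _ => c)
      (fun N => ((((hv_sm N).measurable.indicator hA).mono hk le_rfl).mul
        (hh_meas.mono hk le_rfl)).aestronglyMeasurable) (integrable_const c) ?_ ?_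
    · intro N
      filter_upwards [hvh_le N, hpos] with ω hω hpω
      by_cases hA' : ω ∈ A <;>
        simp only [Set.indicator_of_mem, Set.indicator_of_notMem, hA',
          zero_mul, norm_zero, Real.norm_eq_abs, not_false_iff]
      · rw [abs_of_nonneg (mul_nonneg hω.1 hpω.le)]; exact hω.2
      · exact hc0
    · filter_upwards [hpos] with ω hpω
      by_cases hA' : ω ∈ A <;>
        simp only [Set.indicator_of_mem, Set.indicator_of_notMem, hA',
          zero_mul, not_false_iff]
      · obtain ⟨N0, hN0⟩ := exists_nat_ge (q ω)
        refine Tendsto.congr' ?_ (tendsto_const_nhds (x := c))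
        filter_upwards [eventually_ge_atTop N0] with N hN
        rw [hv]
        simp only
        rw [min_eq_left (hN0.trans (Nat.cast_le.mpr hN)), hq]
        simp only
        rw [div_mul_cancel₀ c hpω.ne']
      · exact tendsto_const_nhds
  have heq : (fun N : ℕ => ∫ ω, A.indicator (v N) ω * B.indicator (fun _ => (1 : ℝ)) ω ∂P)
      = fun N : ℕ => ∫ ω, A.indicator (v N) ω * h ω ∂P := funext fun N => hIN N A hA
  rw [heq] at hL
  have hlim := tendsto_nhds_unique hL hR
  rw [← integral_indicator (hk A hA), hlim, integral_indicator_const (c : ℝ) (hk A hA),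
    smul_eq_mul, mul_comm, measureReal_def]

/-- The conditional density `η_m^y = P[Y = y | ℱ m] / P[Y = y]` of the signal `Y`
with respect to the filtration `ℱ`. -/
noncomputable def condDensity {Ω E : Type*} {mΩ : MeasurableSpace Ω}
    (P : Measure Ω) (ℱ : ℕ → MeasurableSpace Ω) (Y : Ω → E) (m : ℕ) (y : E) : Ω → ℝ :=
  fun ω =>
    (P[Set.indicator {ω' | Y ω' = y} (fun _ => (1 : ℝ)) | ℱ m]) ω / (P {ω' | Y ω' = y}).toReal

/-- The process `m ↦ 1 / η_m^{Y}` is a martingale under `P` with respect to the initially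
enlarged filtration `G_m = ℱ_m ⊔ σ(Y)`. -/
theorem stmt0 {Ω E : Type*} {mΩ : MeasurableSpace Ω} [Countable E]
    (P : Measure Ω) [IsProbabilityMeasure P] (n : ℕ)
    (ℱ : ℕ → MeasurableSpace Ω) (hmono : Monotone ℱ) (hle : ∀ m, ℱ m ≤ mΩ)
    (Y : Ω → E) (hY : @Measurable Ω E (ℱ n) ⊤ Y)
    (hYpos : ∀ y ∈ Set.range Y, 0 < P {ω | Y ω = y})
    (hη : ∀ m, m < n → ∀ y ∈ Set.range Y, ∀ᵐ ω ∂P, 0 < condDensity P ℱ Y m y ω) :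
    ∀ m m', m < m' → m' < n →
      P[fun ω => (condDensity P ℱ Y m' (Y ω) ω)⁻¹ | ℱ m ⊔ MeasurableSpace.comap Y ⊤]
        =ᵐ[P] fun ω => (condDensity P ℱ Y m (Y ω) ω)⁻¹ := by
  intro m m' hmm' hm'n
  have hmn : m < n := hmm'.trans hm'n
  letI : MeasurableSpace E := ⊤
  haveI : MeasurableSingletonClass E := ⟨fun _ => trivial⟩
  set B : E → Set Ω := fun y => {ω' | Y ω' = y} with hBdef
  have hBn : ∀ y, MeasurableSet[ℱ n] (B y) := fun y => by
    exact hY (show MeasurableSet[⊤] ({y} : Set E) from trivial)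
  have hB : ∀ y, MeasurableSet[mΩ] (B y) := fun y => hle n _ (hBn y)
  have hcom : MeasurableSpace.comap Y ⊤ ≤ ℱ n := by
    rintro s ⟨t, -, rfl⟩; exact hY MeasurableSpace.measurableSet_top
  have hGle : (ℱ m ⊔ MeasurableSpace.comap Y ⊤) ≤ mΩ := sup_le (hle m) (hcom.trans (hle n))
  haveI : SigmaFinite (P.trim hGle) := (isFiniteMeasure_trim hGle).toSigmaFinite
  set c : E → ℝ := fun y => (P (B y)).toReal with hcdef
  set h : ℕ → E → Ω → ℝ :=
    fun k y => P[(B y).indicator (fun _ => (1 : ℝ)) | ℱ k] with hhdef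
  set u : ℕ → E → Ω → ℝ :=
    fun k y => (B y).indicator (fun ω => c y / h k y ω) with hudef
  -- pointwise representation
  have hrep : ∀ k ω, (condDensity P ℱ Y k (Y ω) ω)⁻¹ = u k (Y ω) ω := by
    intro k ω
    rw [hudef]
    dsimp only
    rw [Set.indicator_of_mem (show ω ∈ B (Y ω) from rfl)]
    simp only [condDensity, hcdef, hhdef, hBdef]
    rw [inv_div]
  -- the key single-y facts
  have key : ∀ k, k < n → ∀ y, (0 ≤ᵐ[P] u k y) ∧ Integrable (u k y) P ∧
      ∀ A, MeasurableSet[ℱ k] A → ∫ ω in A, u k y ω ∂P = c y * (P A).toReal := by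
    intro k hkn y
    by_cases hy : y ∈ Set.range Y
    · have hcpos : 0 < c y := ENNReal.toReal_pos (hYpos y hy).ne' (measure_ne_top P _)
      have hpos : ∀ᵐ ω ∂P, 0 < (P[(B y).indicator (fun _ => (1 : ℝ)) | ℱ k]) ω := by
        filter_upwards [hη k hkn y hy] with ω hω
        simp only [condDensity] at hω
        rcases div_pos_iff.mp hω with ⟨h1, _⟩ | ⟨_, h2⟩
        · exact h1
        · exact absurd hcpos (not_lt.mpr h2.le)
      exact condDensity_key (hle k) P (hB y) hpos
    · have hBe : B y = ∅ := by
        ext ω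
        simp only [hBdef, Set.mem_setOf_eq, Set.mem_empty_iff_false, iff_false]
        exact fun hYω => hy ⟨ω, hYω⟩
      have hu0 : u k y = fun _ => (0 : ℝ) := by
        rw [hudef]; dsimp only; rw [hBe, Set.indicator_empty]
      have hc0 : c y = 0 := by rw [hcdef]; dsimp only; rw [hBe]; simp
      refine ⟨?_, ?_, ?_⟩
      · rw [hu0]; exact Eventually.of_forall fun _ => le_rfl
      · rw [hu0]; exact integrable_const 0
      · intro A hA; rw [hu0, hc0]; simp
  set f : Ω → ℝ := fun ω => (condDensity P ℱ Y m' (Y ω) ω)⁻¹ with hfdef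
  set g : Ω → ℝ := fun ω => (condDensity P ℱ Y m (Y ω) ω)⁻¹ with hgdef
  have hfrep : ∀ ω, f ω = u m' (Y ω) ω := fun ω => hrep m' ω
  have hgrep : ∀ ω, g ω = u m (Y ω) ω := fun ω => hrep m ω
  have humeas : ∀ k y, Measurable[mΩ] (u k y) := by
    intro k y
    rw [hudef]; dsimp only
    exact (measurable_const.div
      (stronglyMeasurable_condExp.measurable.mono (hle k) le_rfl)).indicator (hB y)
  have hnorm : ∀ k, k < n → ∀ y, ∫⁻ ω, (‖u k y ω‖₊ : ℝ≥0∞) ∂P ≤ P (B y) := by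
    intro k hkn y
    obtain ⟨hnn, hint, hval⟩ := key k hkn y
    have e2 : ∫ ω, u k y ω ∂P = c y := by
      have := hval univ MeasurableSet.univ
      rwa [Measure.restrict_univ, measure_univ, ENNReal.toReal_one, mul_one] at this
    have e1 : ∫⁻ ω, (‖u k y ω‖₊ : ℝ≥0∞) ∂P = ENNReal.ofReal (∫ ω, u k y ω ∂P) := by
      rw [ofReal_integral_eq_lintegral_ofReal hint hnn]
      refine lintegral_congr_ae ?_
      filter_upwards [hnn] with ω hω
      rw [← enorm_eq_nnnorm, Real.enorm_eq_ofReal hω]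
    rw [e1, e2, hcdef]
    exact ENNReal.ofReal_toReal_le
  have hdisj : Pairwise (Function.onFun Disjoint fun y => B y) := by
    intro y y' hne
    rw [Function.onFun, Set.disjoint_left]
    intro ω hω hω'
    exact hne ((hω : Y ω = y).symm.trans (hω' : Y ω = y'))
  have hUnion : (⋃ y, B y) = univ := by
    ext ω
    simp only [Set.mem_iUnion, Set.mem_univ, iff_true]
    exact ⟨Y ω, rfl⟩
  have htsum : ∑' y, P (B y) = 1 := by
    rw [← measure_iUnion hdisj hB, hUnion, measure_univ]
  have hmeasY : Measurable[mΩ] Y := hY.mono (hle n) le_rfl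
  have hintF : ∀ k, k < n → Integrable (fun ω => u k (Y ω) ω) P := by
    intro k hkn
    have hmeas : Measurable[mΩ] fun ω => u k (Y ω) ω := by
      exact (measurable_from_prod_countable_left (f := fun p : Ω × E => u k p.2 p.1)
        (fun y => humeas k y)).comp (measurable_id.prodMk hmeasY)
    refine ⟨hmeas.aestronglyMeasurable, ?_⟩
    show ∫⁻ ω, (‖u k (Y ω) ω‖₊ : ℝ≥0∞) ∂P < ⊤
    calc ∫⁻ ω, (‖u k (Y ω) ω‖₊ : ℝ≥0∞) ∂P
        ≤ ∫⁻ ω, ∑' y, (‖u k y ω‖₊ : ℝ≥0∞) ∂P :=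
          lintegral_mono fun ω => ENNReal.le_tsum (Y ω)
      _ = ∑' y, ∫⁻ ω, (‖u k y ω‖₊ : ℝ≥0∞) ∂P :=
          lintegral_tsum fun y => ((humeas k y).nnnorm.coe_nnreal_ennreal).aemeasurable
      _ ≤ ∑' y, P (B y) := ENNReal.tsum_le_tsum (hnorm k hkn)
      _ = 1 := htsum
      _ < ⊤ := ENNReal.one_lt_top
  have hf_int : Integrable f P :=
    (hintF m' hm'n).congr (Eventually.of_forall fun ω => (hfrep ω).symm)
  have hg_int : Integrable g P :=
    (hintF m hmn).congr (Eventually.of_forall fun ω => (hgrep ω).symm)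
  -- strong measurability of g w.r.t. G
  have hYG : Measurable[ℱ m ⊔ MeasurableSpace.comap Y ⊤] Y :=
    measurable_iff_comap_le.mpr le_sup_right
  have huG : ∀ y, Measurable[ℱ m ⊔ MeasurableSpace.comap Y ⊤] (u m y) := by
    intro y
    rw [hudef]; dsimp only
    exact (measurable_const.div
      (stronglyMeasurable_condExp.measurable.mono le_sup_left le_rfl)).indicator
      (show MeasurableSet[ℱ m ⊔ MeasurableSpace.comap Y ⊤] (B y) by
        exact hYG (show MeasurableSet[⊤] ({y} : Set E) from trivial))
  have hgG : Measurable[ℱ m ⊔ MeasurableSpace.comap Y ⊤] g := by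
    have h1 : Measurable[ℱ m ⊔ MeasurableSpace.comap Y ⊤] fun ω => u m (Y ω) ω := by
      exact (measurable_from_prod_countable_left (f := fun p : Ω × E => u m p.2 p.1)
        (fun y => huG y)).comp (measurable_id.prodMk hYG)
    have h2 : g = fun ω => u m (Y ω) ω := funext hgrep
    rw [h2]; exact h1
  -- the generating π-system
  set 𝒞 : Set (Set Ω) := {s | ∃ A, MeasurableSet[ℱ m] A ∧ ∃ y, s = A ∩ B y} with h𝒞
  have hpi : IsPiSystem 𝒞 := by
    rintro s ⟨A, hA, y, rfl⟩ t ⟨A', hA', y', rfl⟩ hst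
    rcases eq_or_ne y y' with rfl | hne
    · refine ⟨A ∩ A', hA.inter hA', y, ?_⟩
      ext ω
      simp only [Set.mem_inter_iff, Set.mem_setOf_eq]
      tauto
    · exfalso
      obtain ⟨ω, hω⟩ := hst
      exact hne ((hω.1.2 : Y ω = y).symm.trans (hω.2.2 : Y ω = y'))
  have hgen : (ℱ m ⊔ MeasurableSpace.comap Y ⊤) = MeasurableSpace.generateFrom 𝒞 := by
    refine le_antisymm (sup_le ?_ ?_) (MeasurableSpace.generateFrom_le ?_)
    · intro A hA
      have hAeq : A = ⋃ y, A ∩ B y := by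
        rw [← Set.inter_iUnion, hUnion, Set.inter_univ]
      rw [hAeq]
      exact MeasurableSet.iUnion fun y =>
        MeasurableSpace.measurableSet_generateFrom ⟨A, hA, y, rfl⟩
    · rintro s ⟨t, -, rfl⟩
      have hteq : Y ⁻¹' t = ⋃ y ∈ t, univ ∩ B y := by
        ext ω
        simp only [Set.mem_preimage, Set.mem_iUnion, Set.univ_inter, Set.mem_setOf_eq]
        exact ⟨fun hmem => ⟨Y ω, hmem, rfl⟩, fun ⟨y, hy, hYy⟩ => hYy ▸ hy⟩
      rw [hteq]
      exact MeasurableSet.biUnion t.to_countable fun y _ =>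
        MeasurableSpace.measurableSet_generateFrom ⟨univ, MeasurableSet.univ, y, rfl⟩
    · rintro s ⟨A, hA, y, rfl⟩
      exact ((le_sup_left : ℱ m ≤ ℱ m ⊔ MeasurableSpace.comap Y ⊤) _ hA).inter
        (show MeasurableSet[ℱ m ⊔ MeasurableSpace.comap Y ⊤] (B y) by
          exact hYG (show MeasurableSet[⊤] ({y} : Set E) from trivial))
  -- basic integral computation
  have hbasic : ∀ A, MeasurableSet[ℱ m] A → ∀ y,
      (∫ ω in A ∩ B y, g ω ∂P = c y * (P A).toReal) ∧
      (∫ ω in A ∩ B y, f ω ∂P = c y * (P A).toReal) := by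
    intro A hA y
    have hsub : ∀ (k : ℕ), k < n → MeasurableSet[ℱ k] A → ∀ w : Ω → ℝ,
        (∀ ω, w ω = u k (Y ω) ω) → ∫ ω in A ∩ B y, w ω ∂P = c y * (P A).toReal := by
      intro k hkn hAk w hw
      have h1 : ∫ ω in A ∩ B y, w ω ∂P = ∫ ω in A ∩ B y, u k y ω ∂P := by
        refine setIntegral_congr_fun ((hle k A hAk).inter (hB y)) ?_
        intro ω hω
        rw [hw ω, show Y ω = y from hω.2]
      have h2 : ∫ ω in A ∩ B y, u k y ω ∂P = ∫ ω in A, u k y ω ∂P := by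
        rw [hudef]; dsimp only
        rw [setIntegral_indicator (hB y), setIntegral_indicator (hB y),
          Set.inter_assoc, Set.inter_self]
      obtain ⟨-, -, hval⟩ := key k hkn y
      rw [h1, h2, hval A hAk]
    exact ⟨hsub m hmn hA g hgrep, hsub m' hm'n (hmono hmm'.le A hA) f hfrep⟩
  -- total integrals are equal
  have htotal : ∫ ω, g ω ∂P = ∫ ω, f ω ∂P := by
    have hInt : ∀ w : Ω → ℝ, Integrable w P →
        (∀ y, ∫ ω in univ ∩ B y, w ω ∂P = c y * (P (univ : Set Ω)).toReal) →
        ∫ ω, w ω ∂P = ∑' y, c y := by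
      intro w hw hval
      rw [← setIntegral_univ, ← hUnion,
        integral_iUnion hB hdisj hw.integrableOn]
      refine tsum_congr fun y => ?_
      have := hval y
      rwa [Set.univ_inter, measure_univ, ENNReal.toReal_one, mul_one] at this
    rw [hInt g hg_int fun y => (hbasic univ MeasurableSet.univ y).1,
      hInt f hf_int fun y => (hbasic univ MeasurableSet.univ y).2]
  -- equality of set integrals on all G-measurable sets
  have hsets : ∀ s, MeasurableSet[ℱ m ⊔ MeasurableSpace.comap Y ⊤] s →
      ∫ ω in s, g ω ∂P = ∫ ω in s, f ω ∂P := by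
    intro s hs
    refine MeasurableSpace.induction_on_inter (m := ℱ m ⊔ MeasurableSpace.comap Y ⊤)
      (C := fun s _ => ∫ ω in s, g ω ∂P = ∫ ω in s, f ω ∂P) hgen hpi ?_ ?_ ?_ ?_ s hs
    · simp
    · rintro t ⟨A, hA, y, rfl⟩
      rw [(hbasic A hA y).1, (hbasic A hA y).2]
    · intro t htm ht
      have h1 := integral_add_compl (hGle t htm) hg_int
      have h2 := integral_add_compl (hGle t htm) hf_int
      linarith
    · intro s' hdisj' hmeas' hps
      rw [integral_iUnion (fun i => hGle _ (hmeas' i)) hdisj' hg_int.integrableOn,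
        integral_iUnion (fun i => hGle _ (hmeas' i)) hdisj' hf_int.integrableOn]
      exact tsum_congr hps
  have hfinal := ae_eq_condExp_of_forall_setIntegral_eq (μ := P) hGle hf_int
    (fun s _ _ => hg_int.integrableOn) (fun s hs _ => hsets s hs)
    (hgG.stronglyMeasurable.aestronglyMeasurable)
  exact hfinal.symm
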